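/- The product ∏_{1 ≤ j < k ≤ n+1} (1 - z_k/(q^2 z_j))/(1 - z_k/z_j), evaluated at z_j = q^{-2(j-1)} z for 1 ≤ j ≤ n+1, equals ∏_{l=1}^{n+1} (1 - q^{-2l}) / (1 - q^{-2})^{n+1}. -/

import Mathlib

private lemma tele_aux {K : Type*} [Field K] (f : ℕ → K) :
    ∀ k : ℕ, (∀ d, d ≤ k → f d ≠ 0) →
      ∏ d ∈ Finset.range k, f (d + 1) / f d = f k / f 0
  | 0, hf => by rw [Finset.prod_range_zero, div_self (hf 0 le_rfl)]
  | (k+1), hf => by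
      have h0 := hf 0 (Nat.zero_le _)
      have hk := hf k (Nat.le_succ k)
      rw [Finset.prod_range_succ, tele_aux f k (fun d hd => hf d (le_trans hd (Nat.le_succ k)))]
      field_simp

/-- The product `∏_{1 ≤ j < k ≤ n+1} (1 - z_k/(q² z_j))/(1 - z_k/z_j)` evaluated at
`z_j = q^{-2(j-1)} z` equals `∏_{l=1}^{n+1} (1 - q^{-2l}) / (1 - q^{-2})^{n+1}`
(independently of `z`).  Here `j, k` run over `Fin (n+1)` (0-based, so `z_j = q^{-2j} z`). -/
theorem specialized_product {K : Type*} [Field K] (q z : K) (n : ℕ)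
    (hq : q ≠ 0) (hz : z ≠ 0) (h : ∀ l, 1 ≤ l → l ≤ n + 1 → q ^ (2 * l) ≠ 1) :
    (∏ k : Fin (n + 1), ∏ j ∈ Finset.univ.filter (fun j => j < k),
        (1 - (q⁻¹ ^ (2 * k.val) * z) / (q ^ 2 * (q⁻¹ ^ (2 * j.val) * z)))
          / (1 - (q⁻¹ ^ (2 * k.val) * z) / (q⁻¹ ^ (2 * j.val) * z)))
      = (∏ l ∈ Finset.range (n + 1), (1 - q⁻¹ ^ (2 * (l + 1)))) / (1 - q⁻¹ ^ 2) ^ (n + 1) := by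
  set u : K := q⁻¹ ^ 2 with hu_def
  have hq' : q⁻¹ ≠ 0 := inv_ne_zero hq
  have hu0 : u ≠ 0 := pow_ne_zero _ hq'
  have huq : u * q ^ 2 = 1 := by
    rw [hu_def, inv_pow, inv_mul_cancel₀ (pow_ne_zero _ hq)]
  have hune : ∀ d : ℕ, 1 ≤ d → d ≤ n + 1 → 1 - u ^ d ≠ 0 := by
    intro d h1 h2 hcontra
    apply h d h1 h2
    have hud : u ^ d = 1 := by linear_combination -hcontra
    have h3 : u ^ d * q ^ (2 * d) = 1 := by
      rw [hu_def, ← pow_mul, inv_pow, inv_mul_cancel₀ (pow_ne_zero _ hq)]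
    rw [hud, one_mul] at h3
    exact h3
  -- per-term simplification
  have term_eq : ∀ (k j : ℕ), j < k →
      (1 - (q⁻¹ ^ (2 * k) * z) / (q ^ 2 * (q⁻¹ ^ (2 * j) * z)))
        / (1 - (q⁻¹ ^ (2 * k) * z) / (q⁻¹ ^ (2 * j) * z))
      = (1 - u ^ (k - j + 1)) / (1 - u ^ (k - j)) := by
    intro k j hjk
    obtain ⟨d, rfl⟩ := Nat.exists_eq_add_of_lt hjk
    have hkj : j + d + 1 - j = d + 1 := by omega
    rw [hkj]
    have huj : (u : K) ^ j ≠ 0 := pow_ne_zero _ hu0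
    have e1 : q⁻¹ ^ (2 * (j + d + 1)) = u ^ j * u ^ (d + 1) := by rw [hu_def]; ring
    have e2 : q⁻¹ ^ (2 * j) = u ^ j := by rw [hu_def, ← pow_mul]
    rw [e1, e2]
    congr 1
    · congr 1
      rw [div_eq_iff (mul_ne_zero (pow_ne_zero _ hq) (mul_ne_zero huj hz))]
      linear_combination (-(u ^ (d + 1) * u ^ j * z)) * huq
    · congr 1
      rw [div_eq_iff (mul_ne_zero huj hz)]
      ring
  have inner_eq : ∀ k : Fin (n + 1),
      (∏ j ∈ Finset.univ.filter (fun j => j < k),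
        (1 - (q⁻¹ ^ (2 * k.val) * z) / (q ^ 2 * (q⁻¹ ^ (2 * j.val) * z)))
          / (1 - (q⁻¹ ^ (2 * k.val) * z) / (q⁻¹ ^ (2 * j.val) * z)))
      = (1 - u ^ (k.val + 1)) / (1 - u) := by
    intro k
    have hstep : (∏ j ∈ Finset.univ.filter (fun j => j < k),
        (1 - (q⁻¹ ^ (2 * k.val) * z) / (q ^ 2 * (q⁻¹ ^ (2 * j.val) * z)))
          / (1 - (q⁻¹ ^ (2 * k.val) * z) / (q⁻¹ ^ (2 * j.val) * z)))
        = ∏ j ∈ Finset.range k.val,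
            (1 - u ^ (k.val - j + 1)) / (1 - u ^ (k.val - j)) := by
      refine Finset.prod_nbij' (fun (j : Fin (n+1)) => j.val)
        (fun (j : ℕ) => ⟨j % (n+1), Nat.mod_lt _ (Nat.succ_pos n)⟩)
        ?_ ?_ ?_ ?_ ?_
      · intro a ha
        simp only [Finset.mem_filter, Finset.mem_univ, true_and, Fin.lt_def] at ha
        exact Finset.mem_range.mpr ha
      · intro a ha
        rw [Finset.mem_range] at ha
        simp only [Finset.mem_filter, Finset.mem_univ, true_and, Fin.lt_def]
        have hm : a % (n+1) = a := Nat.mod_eq_of_lt (by have := k.isLt; omega)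
        simpa [hm] using ha
      · intro a _
        apply Fin.ext
        simp [Nat.mod_eq_of_lt a.isLt]
      · intro a ha
        rw [Finset.mem_range] at ha
        have hm : a % (n+1) = a := Nat.mod_eq_of_lt (by have := k.isLt; omega)
        simp [hm]
      · intro a ha
        simp only [Finset.mem_filter, Finset.mem_univ, true_and, Fin.lt_def] at ha
        exact term_eq k.val a.val ha
    rw [hstep]
    have hrefl : (∏ j ∈ Finset.range k.val,
            (1 - u ^ (k.val - j + 1)) / (1 - u ^ (k.val - j)))
        = ∏ j ∈ Finset.range k.val, (1 - u ^ (j + 1 + 1)) / (1 - u ^ (j + 1)) := by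
      rw [← Finset.prod_range_reflect (fun j => (1 - u ^ (j + 1 + 1)) / (1 - u ^ (j + 1)))]
      apply Finset.prod_congr rfl
      intro j hj
      simp only [Finset.mem_range] at hj
      have h1 : k.val - 1 - j + 1 = k.val - j := by omega
      rw [h1]
    rw [hrefl]
    have hlt := k.isLt
    have := tele_aux (fun d => 1 - u ^ (d + 1)) k.val (fun d hd =>
      hune (d + 1) (Nat.succ_le_succ (Nat.zero_le _)) (by omega))
    simpa only [zero_add, pow_one] using this
  rw [Finset.prod_congr rfl (fun k _ => inner_eq k)]
  rw [Fin.prod_univ_eq_prod_range (fun k => (1 - u ^ (k + 1)) / (1 - u))]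
  rw [Finset.prod_div_distrib, Finset.prod_const]
  congr 1
  · apply Finset.prod_congr rfl
    intro l _
    rw [hu_def, ← pow_mul, mul_comm 2 (l+1), mul_comm (l+1) 2]
  · rw [Finset.card_range]
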